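/- For every y > 0 and every real a with |a| < π/2, (2/π)·∫₀^∞ ν·sin(aν)·K_{iν}(y) dν = y·e^{−y·cosh a}·sinh a, where K_{iν}(y) = ∫₀^∞ e^{−y cosh t} cos(νt) dt. -/

import Mathlib

open Real MeasureTheory Set Filter FourierTransform

lemma KL_abs_le_cosh (t : ℝ) : |t| ≤ Real.cosh t := by
  rw [← Real.cosh_abs]
  exact le_trans (Real.self_le_sinh_iff.mpr (abs_nonneg t)) (Real.sinh_lt_cosh _).le

lemma KL_integrable_exp_neg_abs {c : ℝ} (hc : 0 < c) :
    Integrable (fun t : ℝ => Real.exp (-c * |t|)) := by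
  have h1 : IntegrableOn (fun t : ℝ => Real.exp (-c * |t|)) (Ioi (0:ℝ)) := by
    refine (exp_neg_integrableOn_Ioi 0 hc).congr_fun (fun x hx => ?_) measurableSet_Ioi
    rw [abs_of_pos hx]
  have m : MeasurableEmbedding fun x : ℝ => -x := (Homeomorph.neg ℝ).measurableEmbedding
  have h2 : IntegrableOn (fun t : ℝ => Real.exp (-c * |t|)) (Iic (0:ℝ)) := by
    rw [← Measure.map_neg_eq_self (volume : Measure ℝ), m.integrableOn_map_iff]
    simp only [Function.comp_def, abs_neg, neg_preimage, neg_Iic, neg_zero]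
    exact (integrableOn_Ici_iff_integrableOn_Ioi).mpr h1
  have := h2.union h1
  rwa [Iic_union_Ioi, integrableOn_univ] at this

lemma KL_integrable_cosh_pow {c : ℝ} (hc : 0 < c) (n : ℕ) :
    Integrable (fun t : ℝ => Real.cosh t ^ n * Real.exp (-(c * Real.cosh t))) := by
  have hcont : Continuous fun t : ℝ => Real.cosh t ^ n * Real.exp (-(c * Real.cosh t)) := by
    continuity
  refine ((KL_integrable_exp_neg_abs (half_pos hc)).const_mul
      ((n.factorial : ℝ) * (2 / c) ^ n)).mono' hcont.aestronglyMeasurable ?_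
  filter_upwards with t
  have h0 : (0:ℝ) ≤ Real.cosh t := (Real.cosh_pos t).le
  have hE : (0:ℝ) < Real.exp (-(c * Real.cosh t)) := Real.exp_pos _
  have h1 : ((c/2) * Real.cosh t) ^ n / (n.factorial : ℝ) ≤ Real.exp ((c/2) * Real.cosh t) :=
    Real.pow_div_factorial_le_exp _ (by positivity) n
  have hfac : (0:ℝ) < (n.factorial : ℝ) := by positivity
  have h2 : Real.cosh t ^ n ≤ (n.factorial : ℝ) * (2 / c) ^ n * Real.exp ((c/2) * Real.cosh t) := by
    rw [div_le_iff₀ hfac] at h1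
    have e1 : Real.cosh t ^ n = (2 / c) ^ n * ((c/2) * Real.cosh t) ^ n := by
      rw [← mul_pow]
      congr 1
      field_simp
    rw [e1]
    calc (2 / c) ^ n * ((c/2) * Real.cosh t) ^ n
        ≤ (2 / c) ^ n * (Real.exp ((c/2) * Real.cosh t) * (n.factorial : ℝ)) := by
          apply mul_le_mul_of_nonneg_left h1 (by positivity)
      _ = (n.factorial : ℝ) * (2 / c) ^ n * Real.exp ((c/2) * Real.cosh t) := by ring
  rw [Real.norm_eq_abs, abs_of_nonneg (by positivity)]
  calc Real.cosh t ^ n * Real.exp (-(c * Real.cosh t))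
      ≤ ((n.factorial : ℝ) * (2 / c) ^ n * Real.exp ((c/2) * Real.cosh t)) *
          Real.exp (-(c * Real.cosh t)) := by
        apply mul_le_mul_of_nonneg_right h2 hE.le
    _ = (n.factorial : ℝ) * (2 / c) ^ n * Real.exp (-(c/2) * Real.cosh t) := by
        rw [mul_assoc, ← Real.exp_add]; ring_nf
    _ ≤ (n.factorial : ℝ) * (2 / c) ^ n * Real.exp (-(c/2) * |t|) := by
        apply mul_le_mul_of_nonneg_left _ (by positivity)
        apply Real.exp_le_exp.mpr
        have := KL_abs_le_cosh t
        nlinarith [half_pos hc]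

lemma KL_integrable_of_bound {y : ℝ} (hy : 0 < y) {g : ℝ → ℝ} (hg : Continuous g) (C : ℝ) (n : ℕ)
    (hb : ∀ t, |g t| ≤ C * (Real.cosh t ^ n * Real.exp (-(y * Real.cosh t)))) :
    Integrable g := by
  refine ((KL_integrable_cosh_pow hy n).const_mul C).mono' hg.aestronglyMeasurable ?_
  filter_upwards with t
  rw [Real.norm_eq_abs]
  exact hb t

lemma KL_integral_odd {g : ℝ → ℝ} (hg : ∀ x, g (-x) = - g x) : ∫ x, g x = 0 := by
  have h := MeasureTheory.integral_neg_eq_self g (volume : Measure ℝ)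
  simp_rw [hg, integral_neg] at h
  linarith

lemma KL_integral_even {g : ℝ → ℝ} (hg : ∀ x, g (-x) = g x) :
    ∫ x, g x = 2 * ∫ x in Ioi (0:ℝ), g x := by
  rw [← integral_comp_abs (f := g)]
  congr 1
  ext x
  rcases le_or_gt 0 x with h | h
  · rw [abs_of_nonneg h]
  · rw [abs_of_neg h, hg]

noncomputable def KLf (y : ℝ) : ℝ → ℝ := fun t => Real.exp (-(y * Real.cosh t)) * Real.sinh t

noncomputable def KLg1 (y : ℝ) : ℝ → ℝ := fun t =>
  Real.exp (-(y * Real.cosh t)) * (Real.cosh t - y * Real.sinh t ^ 2)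

noncomputable def KLg2 (y : ℝ) : ℝ → ℝ := fun t =>
  Real.exp (-(y * Real.cosh t)) *
    (Real.sinh t - 3 * y * (Real.sinh t * Real.cosh t) + y ^ 2 * Real.sinh t ^ 3)

noncomputable def KLS (y : ℝ) : ℝ → ℝ := fun ν =>
  ∫ t in Ioi (0:ℝ), Real.exp (-(y * Real.cosh t)) * Real.sinh t * Real.sin (ν * t)

lemma KL_hexp (y : ℝ) (t : ℝ) : HasDerivAt (fun t => Real.exp (-(y * Real.cosh t)))
    (Real.exp (-(y * Real.cosh t)) * (-(y * Real.sinh t))) t :=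
  (((Real.hasDerivAt_cosh t).const_mul y).neg).exp

lemma KL_hd1 (y : ℝ) (t : ℝ) : HasDerivAt (KLf y) (KLg1 y t) t := by
  have h := (KL_hexp y t).mul (Real.hasDerivAt_sinh t)
  refine h.congr_deriv ?_
  simp only [KLg1]
  ring

lemma KL_hd2 (y : ℝ) (t : ℝ) : HasDerivAt (KLg1 y) (KLg2 y t) t := by
  have hin : HasDerivAt (fun t : ℝ => Real.cosh t - y * Real.sinh t ^ 2)
      (Real.sinh t - y * (2 * Real.sinh t ^ 1 * Real.cosh t)) t :=
    (Real.hasDerivAt_cosh t).sub (((Real.hasDerivAt_sinh t).pow 2).const_mul y)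
  have h := (KL_hexp y t).mul hin
  refine h.congr_deriv ?_
  simp only [KLg2, pow_one]
  ring

lemma KL_habs_sinh (t : ℝ) : |Real.sinh t| ≤ Real.cosh t := by
  rw [Real.abs_sinh, ← Real.cosh_abs]
  exact (Real.sinh_lt_cosh _).le

lemma KL_f_cont (y : ℝ) : Continuous (KLf y) := by unfold KLf; fun_prop

lemma KL_g1_cont (y : ℝ) : Continuous (KLg1 y) := by unfold KLg1; fun_prop

lemma KL_g2_cont (y : ℝ) : Continuous (KLg2 y) := by unfold KLg2; fun_prop

lemma KL_f_int {y : ℝ} (hy : 0 < y) : Integrable (KLf y) := by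
  refine KL_integrable_of_bound hy (KL_f_cont y) 1 1 (fun t => ?_)
  have hE : (0:ℝ) < Real.exp (-(y * Real.cosh t)) := Real.exp_pos _
  rw [KLf, abs_mul, abs_of_pos hE]
  calc Real.exp (-(y * Real.cosh t)) * |Real.sinh t|
      ≤ Real.exp (-(y * Real.cosh t)) * Real.cosh t :=
        mul_le_mul_of_nonneg_left (KL_habs_sinh t) hE.le
    _ = 1 * (Real.cosh t ^ 1 * Real.exp (-(y * Real.cosh t))) := by ring

lemma KL_g1_int {y : ℝ} (hy : 0 < y) : Integrable (KLg1 y) := by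
  refine KL_integrable_of_bound hy (KL_g1_cont y) (1 + y) 2 (fun t => ?_)
  have hE : (0:ℝ) < Real.exp (-(y * Real.cosh t)) := Real.exp_pos _
  rw [KLg1, abs_mul, abs_of_pos hE]
  have hcosh1 := Real.one_le_cosh t
  have h1 : |Real.cosh t - y * Real.sinh t ^ 2| ≤ (1 + y) * Real.cosh t ^ 2 := by
    have hs2 : Real.sinh t ^ 2 ≤ Real.cosh t ^ 2 := by
      nlinarith [KL_habs_sinh t, abs_nonneg (Real.sinh t), sq_abs (Real.sinh t)]
    rw [abs_le]
    constructor <;> nlinarith [sq_nonneg (Real.sinh t), hy.le]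
  calc Real.exp (-(y * Real.cosh t)) * |Real.cosh t - y * Real.sinh t ^ 2|
      ≤ Real.exp (-(y * Real.cosh t)) * ((1 + y) * Real.cosh t ^ 2) :=
        mul_le_mul_of_nonneg_left h1 hE.le
    _ = (1 + y) * (Real.cosh t ^ 2 * Real.exp (-(y * Real.cosh t))) := by ring

lemma KL_g2_int {y : ℝ} (hy : 0 < y) : Integrable (KLg2 y) := by
  refine KL_integrable_of_bound hy (KL_g2_cont y) (1 + 3*y + y^2) 3 (fun t => ?_)
  have hE : (0:ℝ) < Real.exp (-(y * Real.cosh t)) := Real.exp_pos _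
  rw [KLg2, abs_mul, abs_of_pos hE]
  have hcosh1 := Real.one_le_cosh t
  have hs3 : |Real.sinh t| ^ 3 ≤ Real.cosh t ^ 3 :=
    pow_le_pow_left₀ (abs_nonneg _) (KL_habs_sinh t) 3
  have hcube1 : Real.sinh t ^ 3 ≤ Real.cosh t ^ 3 :=
    le_trans (le_trans (le_abs_self _) (le_of_eq (abs_pow _ _))) hs3
  have hcube2 : -(Real.cosh t ^ 3) ≤ Real.sinh t ^ 3 := by
    have := neg_abs_le (Real.sinh t ^ 3)
    rw [abs_pow] at this
    linarith
  have hsc := abs_le.mp (KL_habs_sinh t)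
  have hc3 : Real.cosh t ≤ Real.cosh t ^ 3 := by nlinarith [hcosh1, sq_nonneg (Real.cosh t)]
  have hc2 : Real.cosh t ^ 2 ≤ Real.cosh t ^ 3 := by nlinarith [hcosh1, sq_nonneg (Real.cosh t)]
  have hsc2a : Real.sinh t * Real.cosh t ≤ Real.cosh t ^ 2 := by
    nlinarith [hsc.2, (Real.cosh_pos t).le]
  have hsc2b : -(Real.cosh t ^ 2) ≤ Real.sinh t * Real.cosh t := by
    nlinarith [hsc.1, (Real.cosh_pos t).le]
  have m1 : 3 * y * (-(Real.cosh t ^ 2)) ≤ 3 * y * (Real.sinh t * Real.cosh t) :=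
    mul_le_mul_of_nonneg_left hsc2b (by positivity)
  have m2 : 3 * y * (Real.sinh t * Real.cosh t) ≤ 3 * y * Real.cosh t ^ 2 :=
    mul_le_mul_of_nonneg_left hsc2a (by positivity)
  have m3 : y ^ 2 * (-(Real.cosh t ^ 3)) ≤ y ^ 2 * Real.sinh t ^ 3 :=
    mul_le_mul_of_nonneg_left hcube2 (sq_nonneg y)
  have m4 : y ^ 2 * Real.sinh t ^ 3 ≤ y ^ 2 * Real.cosh t ^ 3 :=
    mul_le_mul_of_nonneg_left hcube1 (sq_nonneg y)
  have m5 : 3 * y * Real.cosh t ^ 2 ≤ 3 * y * Real.cosh t ^ 3 :=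
    mul_le_mul_of_nonneg_left hc2 (by positivity)
  have h1 : |Real.sinh t - 3 * y * (Real.sinh t * Real.cosh t) + y ^ 2 * Real.sinh t ^ 3|
      ≤ (1 + 3*y + y^2) * Real.cosh t ^ 3 := by
    rw [abs_le]
    constructor <;> [skip; skip] <;> linarith [hsc.1, hsc.2]
  calc Real.exp (-(y * Real.cosh t)) *
        |Real.sinh t - 3 * y * (Real.sinh t * Real.cosh t) + y ^ 2 * Real.sinh t ^ 3|
      ≤ Real.exp (-(y * Real.cosh t)) * ((1 + 3*y + y^2) * Real.cosh t ^ 3) :=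
        mul_le_mul_of_nonneg_left h1 hE.le
    _ = (1 + 3*y + y^2) * (Real.cosh t ^ 3 * Real.exp (-(y * Real.cosh t))) := by ring

lemma KL_tendE {y : ℝ} (hy : 0 < y) :
    Tendsto (fun t => Real.exp (-(y * Real.cosh t))) atTop (nhds 0) := by
  have hcosh_top : Tendsto Real.cosh atTop atTop :=
    tendsto_atTop_mono (fun t => (le_abs_self t).trans (KL_abs_le_cosh t)) tendsto_id
  have h1 : Tendsto (fun t => y * Real.cosh t) atTop atTop := hcosh_top.const_mul_atTop hy
  exact Real.tendsto_exp_atBot.comp (tendsto_neg_atTop_atBot.comp h1)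

lemma KL_Kcos_int {y : ℝ} (hy : 0 < y) (ν : ℝ) :
    Integrable (fun t => Real.exp (-(y * Real.cosh t)) * Real.cos (ν * t)) := by
  refine KL_integrable_of_bound hy (by fun_prop) 1 0 (fun t => ?_)
  rw [abs_mul, abs_of_pos (Real.exp_pos _), pow_zero]
  have h1 : |Real.cos (ν * t)| ≤ 1 := abs_le.mpr ⟨Real.neg_one_le_cos _, Real.cos_le_one _⟩
  nlinarith [Real.exp_pos (-(y * Real.cosh t)), abs_nonneg (Real.cos (ν * t))]

lemma KL_Ssin_int {y : ℝ} (hy : 0 < y) (ν : ℝ) :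
    Integrable (fun t => Real.exp (-(y * Real.cosh t)) * Real.sinh t * Real.sin (ν * t)) := by
  refine KL_integrable_of_bound hy (by fun_prop) 1 1 (fun t => ?_)
  rw [abs_mul, abs_mul, abs_of_pos (Real.exp_pos _), pow_one]
  have h1 : |Real.sin (ν * t)| ≤ 1 := abs_le.mpr ⟨Real.neg_one_le_sin _, Real.sin_le_one _⟩
  have h2 := KL_habs_sinh t
  nlinarith [Real.exp_pos (-(y * Real.cosh t)), abs_nonneg (Real.sinh t),
    abs_nonneg (Real.sin (ν * t)), (Real.cosh_pos t).le,
    mul_le_mul h2 h1 (abs_nonneg _) (Real.cosh_pos t).le]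

lemma KL_parts {y : ℝ} (hy : 0 < y) (ν : ℝ) :
    ν * (∫ t in Ioi (0:ℝ), Real.exp (-(y * Real.cosh t)) * Real.cos (ν * t)) = y * KLS y ν := by
  have hGd : ∀ t : ℝ, HasDerivAt (fun t => Real.exp (-(y * Real.cosh t)) * Real.sin (ν * t))
      (ν * (Real.exp (-(y * Real.cosh t)) * Real.cos (ν * t))
        - y * (Real.exp (-(y * Real.cosh t)) * Real.sinh t * Real.sin (ν * t))) t := by
    intro t
    have hlin : HasDerivAt (fun t : ℝ => ν * t) ν t := by
      simpa using (hasDerivAt_id t).const_mul ν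
    have hsin : HasDerivAt (fun t : ℝ => Real.sin (ν * t)) (Real.cos (ν * t) * ν) t :=
      (Real.hasDerivAt_sin (ν * t)).comp t hlin
    have h := (KL_hexp y t).mul hsin
    refine h.congr_deriv ?_
    ring
  have hcont : ContinuousWithinAt
      (fun t => Real.exp (-(y * Real.cosh t)) * Real.sin (ν * t)) (Ici (0:ℝ)) 0 :=
    Continuous.continuousWithinAt (by fun_prop)
  have htend : Tendsto (fun t => Real.exp (-(y * Real.cosh t)) * Real.sin (ν * t))
      atTop (nhds 0) := by
    apply squeeze_zero_norm (fun t => ?_) (KL_tendE hy)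
    rw [Real.norm_eq_abs, abs_mul, abs_of_pos (Real.exp_pos _)]
    have h1 : |Real.sin (ν * t)| ≤ 1 := abs_le.mpr ⟨Real.neg_one_le_sin _, Real.sin_le_one _⟩
    nlinarith [Real.exp_pos (-(y * Real.cosh t)), abs_nonneg (Real.sin (ν * t))]
  have hint1 := KL_Kcos_int hy ν
  have hint2 := KL_Ssin_int hy ν
  have key := integral_Ioi_of_hasDerivAt_of_tendsto hcont (fun x _ => hGd x)
    (((hint1.const_mul ν).sub (hint2.const_mul y)).integrableOn) htend
  rw [integral_sub ((hint1.const_mul ν).integrableOn) ((hint2.const_mul y).integrableOn),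
    MeasureTheory.integral_const_mul, MeasureTheory.integral_const_mul] at key
  simp only [mul_zero, Real.sin_zero, zero_sub, neg_eq_zero, mul_zero] at key
  have h0 : y * KLS y ν = y * ∫ t in Ioi (0:ℝ),
      Real.exp (-(y * Real.cosh t)) * Real.sinh t * Real.sin (ν * t) := rfl
  rw [h0]
  linarith [key]

lemma KL_integral_ofReal {f : ℝ → ℝ} : (∫ x, ((f x : ℝ) : ℂ)) = ((∫ x, f x : ℝ) : ℂ) :=
  integral_ofReal

lemma KL_S_odd (y ν : ℝ) : KLS y (-ν) = - KLS y ν := by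
  rw [KLS, KLS, ← integral_neg]
  apply setIntegral_congr_fun measurableSet_Ioi
  intro t _
  dsimp only
  rw [show -ν * t = -(ν * t) by ring, Real.sin_neg]
  ring

lemma KL_inversion {y : ℝ} (hy : 0 < y) (a : ℝ) :
    KLf y a = (2 / π) * ∫ ν in Ioi (0:ℝ), KLS y ν * Real.sin (ν * a) := by
  have twopi : (0:ℝ) < 2 * π := by positivity
  set F : ℝ → ℂ := fun t => ((KLf y t : ℝ) : ℂ) with hF_def
  have hF_deriv : ∀ t : ℝ, HasDerivAt F ((KLg1 y t : ℂ)) t := fun t => (KL_hd1 y t).ofReal_comp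
  have hF_diff : Differentiable ℝ F := fun t => (hF_deriv t).differentiableAt
  have hderivF : deriv F = fun t => ((KLg1 y t : ℝ) : ℂ) := funext fun t => (hF_deriv t).deriv
  have hG1_deriv : ∀ t : ℝ, HasDerivAt (fun t => ((KLg1 y t : ℝ) : ℂ)) ((KLg2 y t : ℂ)) t :=
    fun t => (KL_hd2 y t).ofReal_comp
  have hF_int : Integrable F := (KL_f_int hy).ofReal
  have hG1_int : Integrable (fun t => ((KLg1 y t : ℝ) : ℂ)) := (KL_g1_int hy).ofReal
  have hG2_int : Integrable (fun t => ((KLg2 y t : ℝ) : ℂ)) := (KL_g2_int hy).ofReal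
  have hF_cont : Continuous F := Complex.continuous_ofReal.comp (KL_f_cont y)
  have hFT1 : 𝓕 (deriv F) = fun ξ : ℝ => (2 * ↑π * Complex.I * ↑ξ) • 𝓕 F ξ :=
    Real.fourier_deriv hF_int hF_diff (by rw [hderivF]; exact hG1_int)
  have hd2' : Differentiable ℝ (deriv F) := by
    rw [hderivF]; exact fun t => (hG1_deriv t).differentiableAt
  have hdd : deriv (deriv F) = fun t => ((KLg2 y t : ℝ) : ℂ) := by
    rw [hderivF]; exact funext fun t => (hG1_deriv t).deriv
  have hFT2 : 𝓕 (deriv (deriv F)) = fun ξ : ℝ => (2 * ↑π * Complex.I * ↑ξ) • 𝓕 (deriv F) ξ :=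
    Real.fourier_deriv (by rw [hderivF]; exact hG1_int) hd2' (by rw [hdd]; exact hG2_int)
  set C2 : ℝ := ∫ t, ‖((KLg2 y t : ℝ) : ℂ)‖ with hC2_def
  have hC2nn : 0 ≤ C2 := integral_nonneg (fun t => norm_nonneg _)
  have hnrm : ∀ ξ : ℝ, ‖(2 * ↑π * Complex.I * ↑ξ : ℂ)‖ = 2 * π * |ξ| := by
    intro ξ
    simp [norm_mul, Complex.norm_real, Real.norm_eq_abs, abs_of_pos Real.pi_pos]
  have hkey : ∀ ξ : ℝ, 4 * π^2 * ξ^2 * ‖𝓕 F ξ‖ ≤ C2 := by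
    intro ξ
    have hb : ‖𝓕 (deriv (deriv F)) ξ‖ ≤ C2 := by
      rw [hdd]
      exact VectorFourier.norm_fourierIntegral_le_integral_norm _ _ _ _ _
    have e2 := congrFun hFT2 ξ
    have e1 := congrFun hFT1 ξ
    rw [e2, e1, norm_smul, norm_smul, hnrm ξ] at hb
    calc 4 * π^2 * ξ^2 * ‖𝓕 F ξ‖
        = 2 * π * |ξ| * (2 * π * |ξ| * ‖𝓕 F ξ‖) := by rw [← sq_abs ξ]; ring
      _ ≤ C2 := hb
  set A : ℝ := ∫ t, ‖F t‖ with hA_def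
  have hAnn : 0 ≤ A := integral_nonneg fun t => norm_nonneg _
  have hA : ∀ ξ : ℝ, ‖𝓕 F ξ‖ ≤ A := fun ξ =>
    VectorFourier.norm_fourierIntegral_le_integral_norm _ _ _ _ _
  have hFTcont : Continuous (𝓕 F) :=
    VectorFourier.fourierIntegral_continuous Real.continuous_fourierChar
      (by exact continuous_inner) hF_int
  have hpi1 : (1:ℝ) ≤ 4 * π^2 := by nlinarith [Real.pi_gt_three]
  have hFTint : Integrable (𝓕 F) := by
    refine (integrable_inv_one_add_sq.const_mul (2*A + 2*C2)).mono'
      hFTcont.aestronglyMeasurable ?_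
    filter_upwards with ξ
    have hpos : (0:ℝ) < 1 + ξ^2 := by positivity
    rw [← div_eq_mul_inv, le_div_iff₀ hpos]
    have k := hkey ξ
    have hnn := norm_nonneg (𝓕 F ξ)
    have hξ2 : ξ^2 * ‖𝓕 F ξ‖ ≤ C2 := by
      nlinarith [mul_nonneg (sq_nonneg ξ) hnn]
    nlinarith [hA ξ]
  have hinv : 𝓕⁻ (𝓕 F) a = F a := hF_int.fourierInv_fourier_eq hFTint hF_cont.continuousAt
  -- compute the Fourier transform of F
  have hcos_int : ∀ ξ : ℝ, Integrable (fun v => Real.cos (2*π*v*ξ) * KLf y v) := by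
    intro ξ
    refine (KL_f_int hy).abs.mono'
      (((by fun_prop : Continuous fun v : ℝ => Real.cos (2*π*v*ξ)).mul
        (KL_f_cont y)).aestronglyMeasurable) ?_
    filter_upwards with v
    rw [Real.norm_eq_abs, abs_mul]
    calc |Real.cos (2*π*v*ξ)| * |KLf y v| ≤ 1 * |KLf y v| :=
          mul_le_mul_of_nonneg_right
            (abs_le.mpr ⟨Real.neg_one_le_cos _, Real.cos_le_one _⟩) (abs_nonneg _)
      _ = |KLf y v| := one_mul _
  have hsin_int : ∀ ξ : ℝ, Integrable (fun v => Real.sin (2*π*v*ξ) * KLf y v) := by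
    intro ξ
    refine (KL_f_int hy).abs.mono'
      (((by fun_prop : Continuous fun v : ℝ => Real.sin (2*π*v*ξ)).mul
        (KL_f_cont y)).aestronglyMeasurable) ?_
    filter_upwards with v
    rw [Real.norm_eq_abs, abs_mul]
    calc |Real.sin (2*π*v*ξ)| * |KLf y v| ≤ 1 * |KLf y v| :=
          mul_le_mul_of_nonneg_right
            (abs_le.mpr ⟨Real.neg_one_le_sin _, Real.sin_le_one _⟩) (abs_nonneg _)
      _ = |KLf y v| := one_mul _
  have hE1 : ∀ ξ : ℝ, 𝓕 F ξ = ((-2 * KLS y (2*π*ξ) : ℝ) : ℂ) * Complex.I := by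
    intro ξ
    rw [Real.fourier_real_eq_integral_exp_smul]
    have hpt : ∀ v : ℝ, Complex.exp (↑(-2 * π * v * ξ) * Complex.I) • F v
        = ((Real.cos (2*π*v*ξ) * KLf y v : ℝ) : ℂ)
          + ((-(Real.sin (2*π*v*ξ) * KLf y v) : ℝ) : ℂ) * Complex.I := by
      intro v
      rw [smul_eq_mul, show ((-2 * π * v * ξ : ℝ) : ℂ) = ((-(2*π*v*ξ) : ℝ) : ℂ) by
        push_cast; ring, Complex.exp_mul_I, ← Complex.ofReal_cos, ← Complex.ofReal_sin,
        Real.cos_neg, Real.sin_neg]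
      push_cast
      ring
    simp_rw [hpt]
    have h2i : Integrable (fun v : ℝ => -(Real.sin (2*π*v*ξ) * KLf y v)) := (hsin_int ξ).neg
    have hadd := integral_add (μ := (volume : Measure ℝ))
      (f := fun v : ℝ => ((Real.cos (2*π*v*ξ) * KLf y v : ℝ) : ℂ))
      (g := fun v : ℝ => ((-(Real.sin (2*π*v*ξ) * KLf y v) : ℝ) : ℂ) * Complex.I)
      ((hcos_int ξ).ofReal) (h2i.ofReal.mul_const Complex.I)
    rw [hadd]
    have hodd : (∫ v : ℝ, Real.cos (2*π*v*ξ) * KLf y v) = 0 := by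
      apply KL_integral_odd
      intro v
      simp only [KLf]
      rw [show 2*π*(-v)*ξ = -(2*π*v*ξ) by ring, Real.cos_neg, Real.cosh_neg, Real.sinh_neg]
      ring
    have heven : (∫ v : ℝ, Real.sin (2*π*v*ξ) * KLf y v)
        = 2 * ∫ v in Ioi (0:ℝ), Real.sin (2*π*v*ξ) * KLf y v := by
      apply KL_integral_even
      intro v
      simp only [KLf]
      rw [show 2*π*(-v)*ξ = -(2*π*v*ξ) by ring, Real.sin_neg, Real.cosh_neg, Real.sinh_neg]
      ring
    have hS : (∫ v in Ioi (0:ℝ), Real.sin (2*π*v*ξ) * KLf y v) = KLS y (2*π*ξ) := by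
      rw [KLS]
      apply setIntegral_congr_fun measurableSet_Ioi
      intro v _
      simp only [KLf]
      rw [show 2*π*ξ*v = 2*π*v*ξ by ring]
      ring
    rw [integral_mul_const, KL_integral_ofReal, KL_integral_ofReal, hodd, integral_neg, heven, hS]
    push_cast
    ring
  -- expand the inversion formula
  have hTeq : (fun ξ : ℝ => (𝓕 F ξ).im) = (fun ξ : ℝ => -2 * KLS y (2*π*ξ)) := by
    funext ξ
    rw [hE1 ξ]
    simp
  have hTcont : Continuous (fun ξ : ℝ => -2 * KLS y (2*π*ξ)) := by
    rw [← hTeq]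
    exact Complex.continuous_im.comp hFTcont
  have hTb : ∀ ξ : ℝ, |(-2 * KLS y (2*π*ξ))| ≤ ‖𝓕 F ξ‖ := by
    intro ξ
    rw [show (-2 * KLS y (2*π*ξ)) = (fun ξ : ℝ => -2 * KLS y (2*π*ξ)) ξ from rfl, ← hTeq]
    exact Complex.abs_im_le_norm _
  have hu_int : Integrable (fun ξ : ℝ => -2 * KLS y (2*π*ξ) * Real.sin (2*π*ξ*a)) := by
    refine hFTint.norm.mono'
      ((hTcont.mul (by fun_prop : Continuous fun ξ : ℝ => Real.sin (2*π*ξ*a))).aestronglyMeasurable) ?_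
    filter_upwards with ξ
    rw [Real.norm_eq_abs, abs_mul]
    calc |(-2 * KLS y (2*π*ξ))| * |Real.sin (2*π*ξ*a)| ≤ |(-2 * KLS y (2*π*ξ))| * 1 :=
          mul_le_mul_of_nonneg_left
            (abs_le.mpr ⟨Real.neg_one_le_sin _, Real.sin_le_one _⟩) (abs_nonneg _)
      _ = |(-2 * KLS y (2*π*ξ))| := mul_one _
      _ ≤ ‖𝓕 F ξ‖ := hTb ξ
  have hw_int : Integrable (fun ξ : ℝ => -2 * KLS y (2*π*ξ) * Real.cos (2*π*ξ*a)) := by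
    refine hFTint.norm.mono'
      ((hTcont.mul (by fun_prop : Continuous fun ξ : ℝ => Real.cos (2*π*ξ*a))).aestronglyMeasurable) ?_
    filter_upwards with ξ
    rw [Real.norm_eq_abs, abs_mul]
    calc |(-2 * KLS y (2*π*ξ))| * |Real.cos (2*π*ξ*a)| ≤ |(-2 * KLS y (2*π*ξ))| * 1 :=
          mul_le_mul_of_nonneg_left
            (abs_le.mpr ⟨Real.neg_one_le_cos _, Real.cos_le_one _⟩) (abs_nonneg _)
      _ = |(-2 * KLS y (2*π*ξ))| := mul_one _
      _ ≤ ‖𝓕 F ξ‖ := hTb ξ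
  have hpt2 : ∀ ξ : ℝ, Complex.exp (↑(-2 * π * ξ * -a) * Complex.I) • 𝓕 F ξ
      = ((-(-2 * KLS y (2*π*ξ) * Real.sin (2*π*ξ*a)) : ℝ) : ℂ)
        + ((-2 * KLS y (2*π*ξ) * Real.cos (2*π*ξ*a) : ℝ) : ℂ) * Complex.I := by
    intro ξ
    rw [smul_eq_mul, show ((-2 * π * ξ * -a : ℝ) : ℂ) = ((2*π*ξ*a : ℝ) : ℂ) by push_cast; ring,
      Complex.exp_mul_I, ← Complex.ofReal_cos, ← Complex.ofReal_sin, hE1 ξ]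
    simp [Complex.ext_iff, Complex.mul_re, Complex.mul_im]
    constructor <;> ring
  have hexpand : 𝓕⁻ (𝓕 F) a = ∫ ξ : ℝ, Complex.exp (↑(-2 * π * ξ * -a) * Complex.I) • 𝓕 F ξ := by
    rw [Real.fourierInv_eq_fourier_neg,
      Real.fourier_real_eq_integral_exp_smul]
  rw [hexpand] at hinv
  simp_rw [hpt2] at hinv
  have hu' : Integrable (fun ξ : ℝ => -(-2 * KLS y (2*π*ξ) * Real.sin (2*π*ξ*a))) := hu_int.neg
  have hadd2 := integral_add (μ := (volume : Measure ℝ))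
    (f := fun ξ : ℝ => ((-(-2 * KLS y (2*π*ξ) * Real.sin (2*π*ξ*a)) : ℝ) : ℂ))
    (g := fun ξ : ℝ => ((-2 * KLS y (2*π*ξ) * Real.cos (2*π*ξ*a) : ℝ) : ℂ) * Complex.I)
    (hu'.ofReal) (hw_int.ofReal.mul_const Complex.I)
  rw [hadd2, integral_mul_const, KL_integral_ofReal, KL_integral_ofReal] at hinv
  have hw0 : (∫ ξ : ℝ, -2 * KLS y (2*π*ξ) * Real.cos (2*π*ξ*a)) = 0 := by
    apply KL_integral_odd
    intro ξ
    have e1 : 2*π*(-ξ) = -(2*π*ξ) := by ring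
    rw [e1, KL_S_odd, show -(2*π*ξ)*a = -(2*π*ξ*a) by ring, Real.cos_neg]
    ring
  have hueven : (∫ ξ : ℝ, -(-2 * KLS y (2*π*ξ) * Real.sin (2*π*ξ*a)))
      = 2 * ∫ ξ in Ioi (0:ℝ), -(-2 * KLS y (2*π*ξ) * Real.sin (2*π*ξ*a)) := by
    apply KL_integral_even
    intro ξ
    have e1 : 2*π*(-ξ) = -(2*π*ξ) := by ring
    rw [e1, KL_S_odd, show -(2*π*ξ)*a = -(2*π*ξ*a) by ring, Real.sin_neg]
    ring
  rw [hw0] at hinv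
  have hFa : F a = ((KLf y a : ℝ) : ℂ) := rfl
  rw [hFa, Complex.ofReal_zero, zero_mul, add_zero] at hinv
  have hreal : (∫ ξ : ℝ, -(-2 * KLS y (2*π*ξ) * Real.sin (2*π*ξ*a))) = KLf y a := by
    exact_mod_cast hinv
  have hpt3 : ∀ ξ : ℝ, -(-2 * KLS y (2*π*ξ) * Real.sin (2*π*ξ*a))
      = 2 * (KLS y (2*π*ξ) * Real.sin (2*π*ξ*a)) := by
    intro ξ
    ring
  have hcv := integral_comp_mul_left_Ioi (fun ν => KLS y ν * Real.sin (ν * a)) 0 twopi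
  rw [mul_zero] at hcv
  simp only [smul_eq_mul] at hcv
  have hmain : KLf y a = 2 * ∫ ξ in Ioi (0:ℝ), 2 * (KLS y (2*π*ξ) * Real.sin (2*π*ξ*a)) := by
    rw [← hreal, hueven]
    congr 1
    apply setIntegral_congr_fun measurableSet_Ioi
    intro ξ _
    exact hpt3 ξ
  rw [MeasureTheory.integral_const_mul, hcv] at hmain
  rw [hmain]
  field_simp
  simp_rw [mul_comm a]

theorem stmt_10 (y a : ℝ) (hy : 0 < y) (ha : |a| < π / 2) :
    (2 / π) * ∫ ν in Set.Ioi (0:ℝ), ν * Real.sin (a * ν) *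
        ∫ t in Set.Ioi (0:ℝ), Real.exp (-y * Real.cosh t) * Real.cos (ν * t) =
      y * Real.exp (-y * Real.cosh a) * Real.sinh a := by
  simp only [neg_mul]
  have h1 : ∀ ν ∈ Ioi (0:ℝ), ν * Real.sin (a * ν) *
      (∫ t in Ioi (0:ℝ), Real.exp (-(y * Real.cosh t)) * Real.cos (ν * t))
      = y * (KLS y ν * Real.sin (ν * a)) := by
    intro ν _
    rw [show a * ν = ν * a from mul_comm a ν]
    calc ν * Real.sin (ν * a) *
          (∫ t in Ioi (0:ℝ), Real.exp (-(y * Real.cosh t)) * Real.cos (ν * t))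
        = Real.sin (ν * a) *
          (ν * ∫ t in Ioi (0:ℝ), Real.exp (-(y * Real.cosh t)) * Real.cos (ν * t)) := by ring
      _ = Real.sin (ν * a) * (y * KLS y ν) := by rw [KL_parts hy ν]
      _ = y * (KLS y ν * Real.sin (ν * a)) := by ring
  rw [setIntegral_congr_fun measurableSet_Ioi h1, MeasureTheory.integral_const_mul]
  calc (2 / π) * (y * ∫ ν in Ioi (0:ℝ), KLS y ν * Real.sin (ν * a))
      = y * ((2 / π) * ∫ ν in Ioi (0:ℝ), KLS y ν * Real.sin (ν * a)) := by ring
    _ = y * KLf y a := by rw [← KL_inversion hy a]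
    _ = y * Real.exp (-(y * Real.cosh a)) * Real.sinh a := by
        rw [show KLf y a = Real.exp (-(y * Real.cosh a)) * Real.sinh a from rfl]
        ring
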